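/- Let A be a semisimple complex unital Banach algebra and let e ∈ A. Then the following are equivalent: (i) σ(e·x) ⊆ σ(x) ∪ {0} for all x ∈ A; (ii) e is an idempotent lying in the center of A (i.e., e² = e and e·x = x·e for all x ∈ A). -/

import Mathlib

set_option linter.unusedSectionVars false
set_option maxHeartbeats 1000000

section Aux
variable {A : Type*} [NormedRing A] [NormedAlgebra ℂ A] [CompleteSpace A] [NormOneClass A]

/-- complex scalar multiples stay in a left ideal -/
lemma aux_smul_mem (L : Ideal A) {x : A} (hx : x ∈ L) (γ : ℂ) : γ • x ∈ L := by
  rw [Algebra.smul_def]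
  exact L.mul_mem_left _ hx

/-- reformulation of (i): units map to units under `u ↦ 1 - e + e*u`. -/
lemma unit_one_sub_add {e : A} (hi : ∀ x : A, spectrum ℂ (e * x) ⊆ spectrum ℂ x ∪ {0})
    {u : A} (hu : IsUnit u) : IsUnit (1 - e + e * u) := by
  have h1 : (1 : ℂ) ∉ spectrum ℂ (1 - u) := by
    rw [spectrum.mem_iff]
    push_neg
    simpa using hu
  have h2 : (1 : ℂ) ∉ spectrum ℂ (e * (1 - u)) := by
    intro h
    rcases hi (1 - u) h with h' | h'
    · exact h1 h'
    · simp at h'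
  rw [spectrum.mem_iff] at h2
  push_neg at h2
  have heq : (algebraMap ℂ A) 1 - e * (1 - u) = 1 - e + e * u := by
    rw [map_one]; noncomm_ring
  rwa [heq] at h2

/-- The spectrum of `e` is contained in {0, 1}. -/
lemma spec_e_sub {e : A} (hi : ∀ x : A, spectrum ℂ (e * x) ⊆ spectrum ℂ x ∪ {0}) :
    spectrum ℂ e ⊆ {0, 1} := by
  intro lam hlam
  by_contra hno
  simp only [Set.mem_insert_iff, Set.mem_singleton_iff, not_or] at hno
  obtain ⟨h0, h1⟩ := hno
  set μ : ℂ := 1 - 1/lam with hμ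
  have hμ0 : μ ≠ 0 := by
    simp only [hμ, sub_ne_zero]
    intro h
    apply h1
    field_simp at h
    exact h
  have humap : IsUnit ((algebraMap ℂ A) μ) := (isUnit_iff_ne_zero.mpr hμ0).map (algebraMap ℂ A)
  have hY := unit_one_sub_add hi humap
  have hμmul : μ * (-lam) = 1 - lam := by linear_combination (-lam) * hμ + mul_inv_cancel₀ h0
  have hkey : e - (algebraMap ℂ A) lam
      = (1 - e + e * (algebraMap ℂ A) μ) * ((algebraMap ℂ A) (-lam)) := by
    rw [add_mul, sub_mul, one_mul, mul_assoc, ← map_mul, hμmul]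
    rw [map_sub, map_one, map_neg, mul_sub, mul_one]
    noncomm_ring
  have humap2 : IsUnit ((algebraMap ℂ A) (-lam)) :=
    (isUnit_iff_ne_zero.mpr (by simpa using h0)).map (algebraMap ℂ A)
  have hunit2 : IsUnit (e - (algebraMap ℂ A) lam) := by
    rw [hkey]; exact hY.mul humap2
  rw [spectrum.mem_iff] at hlam
  apply hlam
  have := hunit2.neg
  rwa [neg_sub] at this


/-- a spectral value of maximal modulus gives an element with no left inverse -/
lemma no_left_inv (b : A) (lam : ℂ) (hlam : lam ∈ spectrum ℂ b)
    (hmax : ∀ μ ∈ spectrum ℂ b, ‖μ‖ ≤ ‖lam‖) (hne : lam ≠ 0) :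
    ¬ ∃ s : A, s * (b - algebraMap ℂ A lam) = 1 := by
  rintro ⟨s, hs⟩
  set ε : ℝ := 1/(4*(‖s‖+1)) with hε
  have hspos : (0:ℝ) < ‖s‖ + 1 := by positivity
  have hεpos : 0 < ε := by positivity
  have hlamnorm : 0 < ‖lam‖ := by simpa using hne
  set lamδ : ℂ := lam * (1 + (ε/‖lam‖ : ℝ)) with hlamδ
  have hnormδ : ‖lamδ‖ = ‖lam‖ + ε := by
    rw [hlamδ, norm_mul]
    have h1 : (1 + ((ε/‖lam‖ : ℝ) : ℂ)) = (((1 + ε/‖lam‖ : ℝ)) : ℂ) := by push_cast; ring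
    rw [h1, Complex.norm_real, Real.norm_of_nonneg (by positivity)]
    rw [mul_add, mul_one, ← mul_div_assoc, mul_div_cancel_left₀ _ (ne_of_gt hlamnorm)]
  have hδdiff : ‖lamδ - lam‖ = ε := by
    have h1 : lamδ - lam = lam * ((ε/‖lam‖ : ℝ) : ℂ) := by rw [hlamδ]; ring
    rw [h1, norm_mul, Complex.norm_real, Real.norm_of_nonneg (by positivity)]
    rw [← mul_div_assoc, mul_div_cancel_left₀ _ (ne_of_gt hlamnorm)]
  -- lamδ is not in the spectrum
  have hδnot : lamδ ∉ spectrum ℂ b := by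
    intro h
    have := hmax lamδ h
    rw [hnormδ] at this
    linarith
  rw [spectrum.notMem_iff] at hδnot
  set U := hδnot.unit with hU
  set R : A := ↑U⁻¹ with hR
  have hUval : (U : A) = algebraMap ℂ A lamδ - b := IsUnit.unit_spec hδnot
  have hUR : (algebraMap ℂ A lamδ - b) * R = 1 := by rw [← hUval, hR]; exact U.mul_inv
  -- lower bound : 1 ≤ ε * ‖R‖
  have hlow : 1 ≤ ε * ‖R‖ := by
    by_contra hcon
    push_neg at hcon
    have hsmall : ‖(lamδ - lam) • R‖ < 1 := by
      rw [norm_smul, hδdiff]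
      exact hcon
    have hVunit : IsUnit (1 - (lamδ - lam) • R) := (Units.oneSub _ hsmall).isUnit
    have hfact : algebraMap ℂ A lam - b = (algebraMap ℂ A lamδ - b) * (1 - (lamδ - lam) • R) := by
      rw [mul_sub, mul_one, mul_smul_comm, hUR]
      simp only [Algebra.algebraMap_eq_smul_one, sub_smul, smul_eq_mul, mul_one]
      abel
    have : IsUnit (algebraMap ℂ A lam - b) := by rw [hfact]; exact hδnot.mul hVunit
    rw [spectrum.mem_iff] at hlam
    exact hlam this
  -- upper bound
  have h1 : s * (algebraMap ℂ A lamδ - b) = (lamδ - lam) • s - 1 := by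
    have heq : algebraMap ℂ A lamδ - b
        = (algebraMap ℂ A (lamδ - lam)) - (b - algebraMap ℂ A lam) := by
      rw [map_sub]; abel
    rw [heq, mul_sub, hs]
    congr 1
    rw [Algebra.smul_def, ← Algebra.commutes]
  have h2 := congrArg (· * R) h1
  rw [mul_assoc, hUR, mul_one, sub_mul, smul_mul_assoc, one_mul] at h2
  have h3 := congrArg (· + R) h2
  simp only [sub_add_cancel] at h3
  have hkey : R = (lamδ - lam) • (s * R) - s := by rw [← h3]; abel
  have hnR : ‖R‖ ≤ ε * (‖s‖ * ‖R‖) + ‖s‖ := by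
    calc ‖R‖ = ‖(lamδ - lam) • (s * R) - s‖ := by rw [← hkey]
    _ ≤ ‖(lamδ - lam) • (s * R)‖ + ‖s‖ := norm_sub_le _ _
    _ = ε * ‖s * R‖ + ‖s‖ := by rw [norm_smul, hδdiff]
    _ ≤ ε * (‖s‖ * ‖R‖) + ‖s‖ := by gcongr; exact norm_mul_le s R
  have hεs : ε * ‖s‖ ≤ 1/4 := by
    rw [hε, div_mul_eq_mul_div, one_mul,
      div_le_div_iff₀ (by positivity) (by norm_num : (0:ℝ) < 4)]
    nlinarith [norm_nonneg s]
  have hRb : ‖R‖ ≤ (4/3) * ‖s‖ := by nlinarith [norm_nonneg R, norm_nonneg s]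
  have hfin : (1:ℝ) ≤ 1/3 := by
    calc (1:ℝ) ≤ ε * ‖R‖ := hlow
    _ ≤ ε * ((4/3) * ‖s‖) := by gcongr
    _ = (4/3) * (ε * ‖s‖) := by ring
    _ ≤ (4/3) * (1/4) := by gcongr
    _ = 1/3 := by norm_num
  linarith

/-- maximal left ideals in a Banach algebra are closed -/
lemma max_ideal_closed (L : Ideal A) (hL : L.IsMaximal) : IsClosed (L : Set A) := by
  have hone : (1:A) ∉ closure (L : Set A) := by
    intro h
    rw [Metric.mem_closure_iff] at h
    obtain ⟨l, hl, hdist⟩ := h 1 one_pos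
    have hnorm : ‖1 - l‖ < 1 := by
      rw [dist_eq_norm] at hdist
      exact hdist
    set V := Units.oneSub (1 - l) hnorm with hV
    have hVval : (V : A) = l := by simp [hV, Units.oneSub]
    have h1 : (1:A) ∈ L := by
      have : (↑V⁻¹ : A) * l ∈ L := L.mul_mem_left _ hl
      rwa [← hVval, V.inv_mul] at this
    exact hL.ne_top (Ideal.eq_top_iff_one L |>.mpr h1)
  -- closure is a submodule
  have hsub : closure (L : Set A) ⊆ (L : Set A) := by
    have hclo : ∃ LC : Ideal A, (LC : Set A) = closure (L : Set A) := by
      refine ⟨{ carrier := closure (L : Set A), add_mem' := ?_, zero_mem' := ?_, smul_mem' := ?_ }, rfl⟩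
      · intro a b ha hb
        have : (a, b) ∈ closure ((L : Set A) ×ˢ (L : Set A)) := by
          rw [closure_prod_eq]; exact ⟨ha, hb⟩
        have hcont : Continuous fun p : A × A => p.1 + p.2 := continuous_add
        have := (image_closure_subset_closure_image hcont) ⟨(a,b), this, rfl⟩
        exact closure_mono (t := (L : Set A)) (by rintro _ ⟨⟨x, y⟩, ⟨hx, hy⟩, rfl⟩; exact L.add_mem hx hy) this
      · exact subset_closure L.zero_mem
      · intro c x hx
        have hcont : Continuous fun y : A => c • y := by continuity
        have := (image_closure_subset_closure_image hcont) ⟨x, hx, rfl⟩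
        exact closure_mono (by rintro _ ⟨y, hy, rfl⟩; exact L.smul_mem c hy) this
    obtain ⟨LC, hLC⟩ := hclo
    have hle : L ≤ LC := by intro x hx; rw [← SetLike.mem_coe, hLC]; exact subset_closure hx
    have hne : LC ≠ ⊤ := by
      intro h
      apply hone
      rw [← hLC, h]
      trivial
    have : LC = L := by
      by_contra hneq
      have hlt : L < LC := lt_of_le_of_ne hle (fun h => hneq h.symm)
      exact hne ((Ideal.isMaximal_def.mp hL).2 LC hlt)
    rw [← hLC, this]
  exact isClosed_of_closure_subset hsub


lemma jtrick {L : Ideal A} (hLmax : L.IsMaximal) {t : A} (ht : t ∉ L) (y : A) :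
    ∃ d : A, y - d * t ∈ L := by
  have h1 : L ⊔ Submodule.span A {t} = ⊤ := by
    have hlt : L < L ⊔ Submodule.span A {t} := by
      refine lt_of_le_of_ne le_sup_left (fun h => ht ?_)
      have : t ∈ L ⊔ Submodule.span A {t} :=
        Submodule.mem_sup_right (Submodule.mem_span_singleton_self t)
      rwa [← h] at this
    exact (Ideal.isMaximal_def.mp hLmax).2 _ hlt
  have hy : y ∈ L ⊔ Submodule.span A {t} := by rw [h1]; trivial
  rw [Submodule.mem_sup] at hy
  obtain ⟨l, hl, z, hz, hsum⟩ := hy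
  rw [Submodule.mem_span_singleton] at hz
  obtain ⟨d, hd⟩ := hz
  refine ⟨d, ?_⟩
  rw [← hsum, ← hd, smul_eq_mul]
  simpa using hl

lemma density_step {L : Ideal A} (hLmax : L.IsMaximal) (hLclosed : IsClosed (L : Set A))
    {e t0 : A} (ht0 : ∀ γ : ℂ, e * t0 - γ • t0 ∉ L) :
    ∃ a1 : A, a1 * t0 ∈ L ∧ a1 * (e * t0) ∉ L := by
  classical
  by_contra H
  push_neg at H
  have ht0L : t0 ∉ L := fun h => ht0 0 (by simpa using L.mul_mem_left e h)
  haveI hLcclosed : IsClosed ((L.restrictScalars ℂ : Submodule ℂ A) : Set A) := hLclosed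
  set mkC : A →L[ℂ] (A ⧸ L.restrictScalars ℂ) :=
    LinearMap.mkContinuous (L.restrictScalars ℂ).mkQ 1
      (fun x => by simpa using Submodule.Quotient.norm_mk_le (L.restrictScalars ℂ) x) with hmkC
  have hmk : ∀ x : A, mkC x = Submodule.Quotient.mk x := fun x => rfl
  set φ : A →L[ℂ] (A ⧸ L.restrictScalars ℂ) :=
    mkC.comp (((ContinuousLinearMap.mul ℂ A).flip) t0) with hφdef
  set ψ : A →L[ℂ] (A ⧸ L.restrictScalars ℂ) :=
    mkC.comp (((ContinuousLinearMap.mul ℂ A).flip) (e * t0)) with hψdef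
  have hφ : ∀ x, φ x = Submodule.Quotient.mk (x * t0) := fun x => rfl
  have hψ : ∀ x, ψ x = Submodule.Quotient.mk (x * (e * t0)) := fun x => rfl
  have hmemL : ∀ x : A, (Submodule.Quotient.mk x : A ⧸ L.restrictScalars ℂ) = 0 ↔ x ∈ L := by
    intro x
    rw [Submodule.Quotient.mk_eq_zero]
    exact Iff.rfl
  have hdiff : ∀ x y : A,
      (Submodule.Quotient.mk x : A ⧸ L.restrictScalars ℂ) = Submodule.Quotient.mk y ↔ x - y ∈ L := by
    intro x y
    rw [Submodule.Quotient.eq]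
    exact Iff.rfl
  have hsurj : Function.Surjective φ := by
    intro m
    obtain ⟨y, hy⟩ := Submodule.Quotient.mk_surjective _ m
    obtain ⟨d, hd⟩ := jtrick hLmax ht0L y
    refine ⟨d, ?_⟩
    rw [hφ, ← hy, hdiff]
    simpa using L.neg_mem hd
  obtain ⟨rep, hrep⟩ := Function.Surjective.hasRightInverse hsurj
  have hwd : ∀ x : A, ψ (rep (φ x)) = ψ x := by
    intro x
    have h1 : φ (rep (φ x)) = φ x := hrep _
    rw [hφ, hφ, hdiff, ← sub_mul] at h1
    have h3 := H _ h1
    rw [sub_mul] at h3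
    have h4 : ψ (rep (φ x)) - ψ x = 0 := by
      rw [hψ, hψ, ← Submodule.Quotient.mk_sub, hmemL]
      exact h3
    exact sub_eq_zero.mp h4
  set T0 : (A ⧸ L.restrictScalars ℂ) → (A ⧸ L.restrictScalars ℂ) := fun m => ψ (rep m) with hT0
  have hTφ : ∀ x, T0 (φ x) = ψ x := fun x => hwd x
  have hadd : ∀ m m', T0 (m + m') = T0 m + T0 m' := by
    intro m m'
    have h1 : m + m' = φ (rep m + rep m') := by rw [map_add, hrep, hrep]
    rw [h1, hTφ, map_add, ← hTφ (rep m), ← hTφ (rep m'), hrep, hrep]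
  have hsmul : ∀ (c : ℂ) m, T0 (c • m) = c • T0 m := by
    intro c m
    have h1 : c • m = φ (c • rep m) := by rw [map_smul, hrep]
    rw [h1, hTφ, map_smul, ← hTφ (rep m), hrep]
  have hTcont : Continuous T0 := by
    rw [continuous_def]
    intro U hU
    have himg : T0 ⁻¹' U = φ '' (ψ ⁻¹' U) := by
      ext m
      constructor
      · intro hm
        exact ⟨rep m, hm, hrep m⟩
      · rintro ⟨x, hx, rfl⟩
        simpa [Set.mem_preimage, hTφ x] using hx
    rw [himg]
    exact (φ.isOpenMap hsurj) _ (ψ.continuous.isOpen_preimage U hU)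
  set TL : (A ⧸ L.restrictScalars ℂ) →L[ℂ] (A ⧸ L.restrictScalars ℂ) :=
    ⟨{ toFun := T0, map_add' := hadd, map_smul' := hsmul }, hTcont⟩ with hTL
  have hTLφ : ∀ x, TL (φ x) = ψ x := fun x => hwd x
  haveI : Nontrivial (A ⧸ L.restrictScalars ℂ) :=
    ⟨⟨Submodule.Quotient.mk t0, 0, by rw [Ne, hmemL]; exact ht0L⟩⟩
  obtain ⟨μ, hμ⟩ := spectrum.nonempty TL
  set dd : A := e * t0 - μ • t0 with hdd
  have hddL : dd ∉ L := ht0 μ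
  set S : (A ⧸ L.restrictScalars ℂ) →L[ℂ] (A ⧸ L.restrictScalars ℂ) :=
    TL - algebraMap ℂ _ μ with hS
  have halg : ∀ m : (A ⧸ L.restrictScalars ℂ), (algebraMap ℂ ((A ⧸ L.restrictScalars ℂ) →L[ℂ] (A ⧸ L.restrictScalars ℂ)) μ) m = μ • m := by
    intro m
    rw [Algebra.algebraMap_eq_smul_one]
    simp
  have hSφ : ∀ x : A, S (φ x) = Submodule.Quotient.mk (x * dd) := by
    intro x
    rw [hS]
    simp only [ContinuousLinearMap.sub_apply]
    rw [hTLφ, halg, hψ, hφ]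
    rw [show x * dd = x * (e * t0) - μ • (x * t0) by rw [hdd, mul_sub, mul_smul_comm]]
    rw [Submodule.Quotient.mk_sub, Submodule.Quotient.mk_smul]
  have hker : S.ker = ⊥ := by
    rw [Submodule.eq_bot_iff]
    intro m hm
    rw [LinearMap.mem_ker] at hm
    obtain ⟨x, rfl⟩ := hsurj m
    have hx : x * dd ∈ L := by
      rw [← hmemL, ← hSφ]
      exact hm
    by_cases hxt : x * t0 ∈ L
    · rw [hφ, hmemL]
      exact hxt
    · exfalso
      apply hddL
      obtain ⟨b, hb⟩ := jtrick hLmax hxt t0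
      have hφ1 : φ 1 = φ (b * x) := by
        rw [hφ, hφ, hdiff, one_mul, ← mul_assoc] at *
        simpa [mul_assoc] using hb
      have hz : S (φ 1) = 0 := by
        rw [hφ1, hSφ, hmemL, mul_assoc]
        exact L.mul_mem_left b hx
      rw [hSφ, hmemL, one_mul] at hz
      exact hz
  have hrange : S.range = ⊤ := by
    rw [LinearMap.range_eq_top]
    intro m
    obtain ⟨y, hy⟩ := Submodule.Quotient.mk_surjective _ m
    obtain ⟨b, hb⟩ := jtrick hLmax hddL y
    refine ⟨φ b, ?_⟩
    change S (φ b) = m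
    rw [hSφ, ← hy, hdiff]
    simpa using L.neg_mem hb
  set E := ContinuousLinearEquiv.ofBijective S hker hrange with hE
  have hunit : IsUnit S := by
    refine ⟨⟨S, (E.symm : (A ⧸ L.restrictScalars ℂ) →L[ℂ] (A ⧸ L.restrictScalars ℂ)), ?_, ?_⟩, rfl⟩
    · ext m
      simp only [ContinuousLinearMap.mul_apply, ContinuousLinearMap.one_apply,
        ContinuousLinearEquiv.coe_coe]
      have : S (E.symm m) = E (E.symm m) := by
        rw [hE, ContinuousLinearEquiv.coeFn_ofBijective]
      rw [this, ContinuousLinearEquiv.apply_symm_apply]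
    · ext m
      simp only [ContinuousLinearMap.mul_apply, ContinuousLinearMap.one_apply,
        ContinuousLinearEquiv.coe_coe]
      have : S m = E m := by rw [hE, ContinuousLinearEquiv.coeFn_ofBijective]
      rw [this, ContinuousLinearEquiv.symm_apply_apply]
  rw [spectrum.mem_iff] at hμ
  apply hμ
  have : algebraMap ℂ _ μ - TL = -S := by rw [hS]; abel
  rw [this]
  exact hunit.neg

lemma nonscalar_false {e : A} (hi : ∀ x : A, spectrum ℂ (e * x) ⊆ spectrum ℂ x ∪ {0})
    {L : Ideal A} (hLmax : L.IsMaximal) (hLclosed : IsClosed (L : Set A))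
    {t0 : A} (ht0 : ∀ γ : ℂ, e * t0 - γ • t0 ∉ L) : False := by
  obtain ⟨a1, ha1L, ha1e⟩ := density_step hLmax hLclosed ht0
  obtain ⟨a2, ha2⟩ := jtrick hLmax ha1e (-t0)
  set w : A := a2 * a1 with hw
  have hwt0 : w * t0 ∈ L := by rw [hw, mul_assoc]; exact L.mul_mem_left a2 ha1L
  have hwet0 : w * (e * t0) + t0 ∈ L := by
    have h1 := L.neg_mem ha2
    have h2 : -(-t0 - a2 * (a1 * (e * t0))) = w * (e * t0) + t0 := by
      rw [hw]; noncomm_ring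
    rwa [h2] at h1
  have hpow : ∀ n : ℕ, 2 ≤ n → w^n * (e * t0) ∈ L := by
    intro n hn
    obtain ⟨k, rfl⟩ : ∃ k, n = k + 2 := ⟨n - 2, by omega⟩
    have h2 : w^2 * (e*t0) ∈ L := by
      have h1 : w^2 * (e * t0) = w * (w * (e*t0) + t0) - w * t0 := by noncomm_ring
      rw [h1]
      exact L.sub_mem (L.mul_mem_left w hwet0) hwt0
    rw [pow_add, mul_assoc]
    exact L.mul_mem_left _ h2
  haveI hLcclosed : IsClosed ((L.restrictScalars ℂ : Submodule ℂ A) : Set A) := hLclosed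
  set mkC : A →L[ℂ] (A ⧸ L.restrictScalars ℂ) :=
    LinearMap.mkContinuous (L.restrictScalars ℂ).mkQ 1
      (fun x => by simpa using Submodule.Quotient.norm_mk_le (L.restrictScalars ℂ) x) with hmkC
  set τ : A →L[ℂ] (A ⧸ L.restrictScalars ℂ) :=
    mkC.comp (((ContinuousLinearMap.mul ℂ A).flip) (e * t0)) with hτdef
  have hτ : ∀ x, τ x = Submodule.Quotient.mk (x * (e * t0)) := fun x => rfl
  set u : A := NormedSpace.exp w with hu
  have hexp : τ u = ∑' n : ℕ, τ ((n.factorial : ℂ)⁻¹ • w^n) := by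
    rw [hu, NormedSpace.exp_eq_tsum ℂ]
    exact τ.map_tsum (NormedSpace.expSeries_summable' (𝕂 := ℂ) w)
  have hterm : ∀ n : ℕ, n ∉ Finset.range 2 → τ ((n.factorial : ℂ)⁻¹ • w^n) = 0 := by
    intro n hn
    rw [map_smul, hτ]
    rw [show (Submodule.Quotient.mk (w^n * (e*t0)) : A ⧸ L.restrictScalars ℂ) = 0 from
      (Submodule.Quotient.mk_eq_zero _).mpr (hpow n (by simp at hn; omega))]
    simp
  have hsum2 : τ u = ∑ n ∈ Finset.range 2, τ ((n.factorial : ℂ)⁻¹ • w^n) := by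
    rw [hexp]
    exact tsum_eq_sum hterm
  have heval : τ u = τ (1 + w) := by
    rw [hsum2, Finset.sum_range_succ, Finset.sum_range_one, map_add]
    norm_num
  have hmem : u * (e * t0) - (1 + w) * (e * t0) ∈ L := by
    rw [hτ, hτ, Submodule.Quotient.eq] at heval
    exact heval
  have hl2 : u * (e * t0) - (e * t0 - t0) ∈ L := by
    have h1 : (1 + w) * (e * t0) - (e * t0 - t0) = w * (e * t0) + t0 := by noncomm_ring
    have h2 : u * (e * t0) - (e * t0 - t0)
        = (u * (e * t0) - (1 + w) * (e * t0)) + ((1 + w) * (e * t0) - (e * t0 - t0)) := by abel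
    rw [h2, h1]
    exact L.add_mem hmem hwet0
  have huunit : IsUnit u := by
    letI : NormedAlgebra ℚ A := NormedAlgebra.restrictScalars ℚ ℂ A
    refine ⟨⟨u, NormedSpace.exp (-w), ?_, ?_⟩, rfl⟩
    · rw [hu, ← NormedSpace.exp_add_of_commute (Commute.neg_right (Commute.refl w)),
        add_neg_cancel, NormedSpace.exp_zero]
    · rw [hu, ← NormedSpace.exp_add_of_commute (Commute.neg_left (Commute.refl w)),
        neg_add_cancel, NormedSpace.exp_zero]
  have hYunit := unit_one_sub_add hi huunit
  have hYmem : (1 - e + e * u) * (e * t0) ∈ L := by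
    have hkey : (1 - e + e * u) * (e * t0) = e * (u * (e * t0) - (e * t0 - t0)) := by noncomm_ring
    rw [hkey]
    exact L.mul_mem_left e hl2
  obtain ⟨Yu, hYu⟩ := hYunit
  have hfin : e * t0 ∈ L := by
    have h1 := L.mul_mem_left (↑Yu⁻¹) hYmem
    rw [← mul_assoc] at h1
    have h2 : (↑Yu⁻¹ : A) * (1 - e + e * u) = 1 := by rw [← hYu]; exact Yu.inv_mul
    rw [h2, one_mul] at h1
    exact h1
  have het0 : e * t0 ∉ L := by simpa using ht0 0
  exact het0 hfin


lemma core {e : A} (hi : ∀ x : A, spectrum ℂ (e * x) ⊆ spectrum ℂ x ∪ {0}) {c : A}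
    (hc : ∀ γ : ℂ, γ * γ = γ → ∀ L : Ideal A, L ≠ ⊤ →
      (∀ s : A, e * s - γ • s ∈ L) → ∀ s : A, c * s ∈ L)
    (a : A) : spectrum ℂ (c * a) ⊆ {0} := by
  intro lam0 hlam0
  by_contra hne0
  rw [Set.mem_singleton_iff] at hne0
  obtain ⟨lam, hlam, hmax'⟩ := (spectrum.isCompact (c * a)).exists_isMaxOn ⟨lam0, hlam0⟩
    continuous_norm.continuousOn
  have hmax : ∀ μ ∈ spectrum ℂ (c * a), ‖μ‖ ≤ ‖lam‖ := fun μ hμ => hmax' hμ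
  have hlamne : lam ≠ 0 := by
    intro h
    apply hne0
    have h2 := hmax lam0 hlam0
    rw [h] at h2
    have h3 : ‖lam0‖ ≤ 0 := by simpa using h2
    exact norm_le_zero_iff.mp h3
  have hnl := no_left_inv (c * a) lam hlam hmax hlamne
  set b : A := c * a - algebraMap ℂ A lam with hb
  have hspan : Submodule.span A {b} ≠ ⊤ := by
    intro h
    apply hnl
    have h1 : (1:A) ∈ Submodule.span A {b} := by rw [h]; trivial
    rw [Submodule.mem_span_singleton] at h1
    obtain ⟨s, hs⟩ := h1
    rw [smul_eq_mul] at hs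
    exact ⟨s, hs⟩
  obtain ⟨L, hLmax, hLle⟩ := Ideal.exists_le_maximal _ hspan
  have hbL : b ∈ L := hLle (Submodule.mem_span_singleton_self b)
  have hLne : L ≠ ⊤ := hLmax.ne_top
  have hLclosed := max_ideal_closed L hLmax
  by_cases hsc : ∀ s : A, ∃ γ : ℂ, e * s - γ • s ∈ L
  case neg =>
    push_neg at hsc
    obtain ⟨t0, ht0⟩ := hsc
    exact nonscalar_false hi hLmax hLclosed ht0
  case pos =>
  obtain ⟨γ0, hγ0⟩ := hsc 1
  have huniv : ∀ s : A, e * s - γ0 • s ∈ L := by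
    intro s
    obtain ⟨γ1, hγ1⟩ := hsc s
    obtain ⟨γ2, hγ2⟩ := hsc (1 + s)
    have hcomb : (γ0 - γ2) • (1:A) + (γ1 - γ2) • s ∈ L := by
      have h := L.sub_mem hγ2 (L.add_mem hγ0 hγ1)
      have heq : e * (1 + s) - γ2 • (1 + s) - (e * 1 - γ0 • (1:A) + (e * s - γ1 • s))
          = (γ0 - γ2) • (1:A) + (γ1 - γ2) • s := by
        rw [mul_add]
        simp only [smul_add, sub_smul]
        abel
      rwa [heq] at h
    by_cases hκ : ∃ κ : ℂ, s - κ • (1:A) ∈ L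
    · obtain ⟨κ, hκm⟩ := hκ
      have h1 : e * (s - κ • 1) ∈ L := L.mul_mem_left e hκm
      have h2 : κ • (e * 1 - γ0 • (1:A)) ∈ L := aux_smul_mem L hγ0 κ
      have h3 : γ0 • (κ • (1:A) - s) ∈ L := by
        have := L.neg_mem hκm
        rw [neg_sub] at this
        exact aux_smul_mem L this γ0
      have heq : e * s - γ0 • s
          = e * (s - κ • 1) + κ • (e * 1 - γ0 • (1:A)) + γ0 • (κ • (1:A) - s) := by
        rw [mul_sub, mul_one, mul_smul_comm]
        simp only [smul_sub, smul_smul, mul_one, mul_comm κ γ0]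
        abel
      rw [heq]
      exact L.add_mem (L.add_mem h1 h2) h3
    · push_neg at hκ
      have hγ12 : γ1 = γ2 := by
        by_contra hne
        apply hκ (-((γ1 - γ2)⁻¹ * (γ0 - γ2)))
        have h4 := aux_smul_mem L hcomb (γ1 - γ2)⁻¹
        have heq : (γ1 - γ2)⁻¹ • ((γ0 - γ2) • (1:A) + (γ1 - γ2) • s)
            = s - (-((γ1 - γ2)⁻¹ * (γ0 - γ2))) • (1:A) := by
          rw [smul_add, smul_smul, smul_smul, inv_mul_cancel₀ (sub_ne_zero.mpr hne), one_smul,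
            neg_smul, sub_neg_eq_add]
          abel
        rwa [heq] at h4
      have hγ02 : γ0 = γ2 := by
        by_contra hne
        have h1 : (γ0 - γ2) • (1:A) ∈ L := by
          have h5 := hcomb
          rw [hγ12, sub_self, zero_smul, add_zero] at h5
          exact h5
        have h2 := aux_smul_mem L h1 (γ0 - γ2)⁻¹
        rw [smul_smul, inv_mul_cancel₀ (sub_ne_zero.mpr hne), one_smul] at h2
        exact hLne (Ideal.eq_top_iff_one L |>.mpr h2)
      rw [show γ0 = γ1 by rw [hγ12, ← hγ02]]
      exact hγ1
  have hγσ : γ0 ∈ spectrum ℂ e := by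
    rw [spectrum.mem_iff]
    intro hun
    have hgval : (hun.unit : A) = algebraMap ℂ A γ0 - e := hun.unit_spec
    have h1 := huniv (↑hun.unit⁻¹)
    have heq : e * ↑hun.unit⁻¹ - γ0 • (↑hun.unit⁻¹ : A)
        = -((algebraMap ℂ A γ0 - e) * ↑hun.unit⁻¹) := by
      rw [sub_mul, Algebra.smul_def]
      abel
    rw [heq, IsUnit.mul_val_inv] at h1
    have h2 : (1:A) ∈ L := by simpa using L.neg_mem h1
    exact hLne (Ideal.eq_top_iff_one L |>.mpr h2)
  have hγγ : γ0 * γ0 = γ0 := by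
    rcases spec_e_sub hi hγσ with h | h
    · rw [h]; ring
    · rw [Set.mem_singleton_iff] at h
      rw [h]; ring
  have hca : c * a ∈ L := hc γ0 hγγ L hLne huniv a
  have hlam1 : algebraMap ℂ A lam ∈ L := by
    have h7 := L.sub_mem hca hbL
    rw [hb, sub_sub_cancel] at h7
    exact h7
  have hone : (1:A) ∈ L := by
    have h8 := L.mul_mem_left (algebraMap ℂ A lam⁻¹) hlam1
    rw [← map_mul, inv_mul_cancel₀ hlamne, map_one] at h8
    exact h8
  exact hLne (Ideal.eq_top_iff_one L |>.mpr hone)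

lemma hc_q {e : A} (γ : ℂ) (hγ : γ * γ = γ) (L : Ideal A)
    (hL : ∀ s : A, e * s - γ • s ∈ L) (s : A) : (e * e - e) * s ∈ L := by
  have h1 : e * (e * s) - γ • (e * s) ∈ L := hL (e * s)
  have h2 : e * s - γ • s ∈ L := hL s
  have h3 : γ • (e * s - γ • s) ∈ L := aux_smul_mem L h2 γ
  have heq : (e * e - e) * s
      = (e * (e * s) - γ • (e * s)) + γ • (e * s - γ • s) - (e * s - γ • s) := by
    simp only [smul_sub, smul_smul, hγ, sub_mul, mul_assoc]
    abel
  rw [heq]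
  exact L.sub_mem (L.add_mem h1 h3) h2

lemma hc_z {e : A} (v : A) (γ : ℂ) (L : Ideal A)
    (hL : ∀ s : A, e * s - γ • s ∈ L) (s : A) : (e * v - v * e) * s ∈ L := by
  have h1 : e * (v * s) - γ • (v * s) ∈ L := hL (v * s)
  have h2 : v * (e * s - γ • s) ∈ L := L.mul_mem_left v (hL s)
  have heq : (e * v - v * e) * s
      = (e * (v * s) - γ • (v * s)) - v * (e * s - γ • s) := by
    simp only [mul_sub, sub_mul, mul_assoc, mul_smul_comm]
    abel
  rw [heq]
  exact L.sub_mem h1 h2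

lemma easy_dir {e : A} (hidem : e * e = e) (hcomm : ∀ x : A, e * x = x * e)
    (x : A) : spectrum ℂ (e * x) ⊆ spectrum ℂ x ∪ {0} := by
  intro lam hlam
  by_contra hno
  simp only [Set.mem_union, Set.mem_singleton_iff, not_or] at hno
  obtain ⟨hx, h0⟩ := hno
  rw [spectrum.notMem_iff] at hx
  rw [spectrum.mem_iff] at hlam
  apply hlam
  set m : A := algebraMap ℂ A lam with hm
  set n : A := algebraMap ℂ A lam⁻¹ with hn
  have hnm : n * m = 1 := by rw [hn, hm, ← map_mul, inv_mul_cancel₀ h0, map_one]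
  have hUval : (hx.unit : A) = m - x := hx.unit_spec
  set y : A := ↑hx.unit⁻¹ with hy
  have hgy : (m - x) * y = 1 := by rw [← hUval, hy]; exact hx.unit.mul_inv
  have hyg : y * (m - x) = 1 := by rw [← hUval, hy]; exact hx.unit.inv_mul
  have hme : m * e = e * m := Algebra.commutes lam e
  have hcy : e * y = y * e := by
    have h1 : Commute e (hx.unit : A) := by
      rw [hUval]
      exact Commute.sub_right hme.symm (hcomm x)
    exact h1.units_inv_right
  have hexe : e * x * e = e * x := by
    calc e * x * e = e * (x * e) := by rw [mul_assoc]
    _ = e * (e * x) := by rw [← hcomm x]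
    _ = e * e * x := by rw [mul_assoc]
    _ = e * x := by rw [hidem]
  set G : A := m - e * x with hG
  have hGey : G * (e * y) = e := by
    have t1 : m * (e * y) = e * (m * y) := by
      rw [← mul_assoc, hme, mul_assoc]
    have t2 : (e * x) * (e * y) = e * (x * y) := by
      calc e * x * (e * y) = (e * x * e) * y := (mul_assoc (e*x) e y).symm
      _ = (e * x) * y := by rw [hexe]
      _ = e * (x * y) := mul_assoc e x y
    rw [hG, sub_mul, t1, t2, ← mul_sub, ← sub_mul, hgy, mul_one]
  have hyeG : (e * y) * G = e := by
    have hym : y * m = m * y := (Algebra.commutes lam y).symm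
    have t1 : (e * y) * m = e * (y * m) := by rw [mul_assoc]
    have t2 : (e * y) * (e * x) = e * (y * x) := by
      calc e * y * (e * x) = (e * y * e) * x := (mul_assoc (e*y) e x).symm
      _ = (e * (y * e)) * x := by rw [mul_assoc e y e]
      _ = (e * (e * y)) * x := by rw [← hcy]
      _ = ((e * e) * y) * x := by rw [← mul_assoc e e y]
      _ = (e * y) * x := by rw [hidem]
      _ = e * (y * x) := mul_assoc e y x
    rw [hG, mul_sub, t1, t2, ← mul_sub]
    have t3 : y * m - y * x = y * (m - x) := by rw [mul_sub]
    rw [t3, hyg, mul_one]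
  have hG1e : G * (1 - e) = m * (1 - e) := by
    have t1 : G * e = m * e - e * x := by
      rw [hG, sub_mul, hexe]
    rw [mul_sub, mul_one, t1, hG, mul_sub, mul_one]
    abel
  have h1eG : (1 - e) * G = m * (1 - e) := by
    have t1 : e * G = m * e - e * x := by
      have : e * (e * x) = e * x := by rw [← mul_assoc, hidem]
      rw [hG, mul_sub, this, ← hme]
    rw [sub_mul, one_mul, t1, hG, mul_sub, mul_one]
    abel
  set W : A := e * y + n * (1 - e) with hW
  have hGW : G * W = 1 := by
    have t1 : G * (n * (1 - e)) = n * (G * (1 - e)) := by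
      rw [← mul_assoc, ← Algebra.commutes lam⁻¹ G, mul_assoc]
    rw [hW, mul_add, hGey, t1, hG1e, ← mul_assoc, hnm, one_mul]
    abel
  have hWG : W * G = 1 := by
    have t1 : (n * (1 - e)) * G = n * ((1 - e) * G) := by rw [mul_assoc]
    rw [hW, add_mul, hyeG, t1, h1eG, ← mul_assoc, hnm, one_mul]
    abel
  exact ⟨⟨G, W, hGW, hWG⟩, rfl⟩

end Aux

/-- Theorem 2.2: In a semisimple complex unital Banach algebra, an element `e`
satisfies `σ(e x) ⊆ σ(x) ∪ {0}` for all `x` iff `e` is a central idempotent. -/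
theorem spectral_characterization_central_idempotent
    {A : Type*} [NormedRing A] [NormedAlgebra ℂ A] [CompleteSpace A] [NormOneClass A]
    (hss : ∀ a : A, (∀ x : A, spectrum ℂ (a * x) = {0}) → a = 0)
    (e : A) :
    (∀ x : A, spectrum ℂ (e * x) ⊆ spectrum ℂ x ∪ {0}) ↔
      (e * e = e ∧ ∀ x : A, e * x = x * e) := by
  haveI : Nontrivial A := ⟨1, 0, fun h => by simpa [h] using (norm_one : ‖(1:A)‖ = 1)⟩
  constructor
  · intro hi
    have hzero : ∀ c : A, (∀ a : A, spectrum ℂ (c * a) ⊆ {0}) → c = 0 := by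
      intro c hsub
      apply hss
      intro x
      obtain ⟨μ, hμ⟩ := spectrum.nonempty (c * x)
      have hμ0 : μ = 0 := Set.mem_singleton_iff.mp (hsub x hμ)
      refine Set.Subset.antisymm (hsub x) ?_
      intro ν hν
      rw [Set.mem_singleton_iff] at hν
      rw [hν, ← hμ0]
      exact hμ
    have hq : e * e - e = 0 := by
      apply hzero
      intro a
      exact core hi (fun γ hγ L _ hL s => hc_q γ hγ L hL s) a
    have hz : ∀ v : A, e * v - v * e = 0 := by
      intro v
      apply hzero
      intro a
      exact core hi (fun γ _ L _ hL s => hc_z v γ L hL s) a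
    exact ⟨sub_eq_zero.mp hq, fun v => sub_eq_zero.mp (hz v)⟩
  · rintro ⟨hidem, hcomm⟩
    exact easy_dir hidem hcomm
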